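/- Let A be a unital C*-algebra with faithful state φ, and let (π, H, ξ) be the GNS representation of (A, φ). Let B ⊆ A be a unital C*-subalgebra, H_B the closure of {π(b)ξ : b ∈ B} in H, and P the orthogonal projection of H onto H_B. If there is a norm-dense subset X of A such that P π(x)|_{H_B} ∈ P π(B)|_{H_B} for every x ∈ X, then there exists a projection E of norm one from A onto B satisfying φ ∘ E = φ. -/

import Mathlib

set_option maxHeartbeats 1000000 in
/-- Lemma 2.1: Let `(π, H, ξ)` be the GNS representation of a unital
C*-algebra `A` with faithful state `φ`, `B ⊆ A` a unital C*-subalgebra, `K = H_B` the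
closure of `π(B)ξ` and `P` the orthogonal projection onto `K`.  If on a norm-dense set
`X ⊆ A` the compression `P π(x)|_K` lies in `P π(B)|_K`, then there is a norm-one
projection `E` from `A` onto `B` with `φ ∘ E = φ`. -/
theorem gns_compression_gives_condExp
    {A : Type*} [CStarAlgebra A]
    {H : Type*} [NormedAddCommGroup H] [InnerProductSpace ℂ H] [CompleteSpace H]
    (φ : A →ₗ[ℂ] ℂ)
    (hφ_state : φ 1 = 1)
    (hφ_pos : ∀ a : A, 0 ≤ (φ (star a * a)).re ∧ (φ (star a * a)).im = 0)
    (hφ_faithful : ∀ a : A, φ (star a * a) = 0 → a = 0)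
    (π : A →⋆ₐ[ℂ] (H →L[ℂ] H)) (ξ : H)
    (hcyclic : DenseRange fun a : A => π a ξ)
    (hGNS : ∀ a₁ a₂ : A, (inner ℂ (π a₂ ξ) (π a₁ ξ) : ℂ) = φ (star a₂ * a₁))
    (B : StarSubalgebra ℂ A) (hBclosed : IsClosed (B : Set A)) (hB1 : (1 : A) ∈ B)
    (K : Submodule ℂ H)
    (hK : (K : Set H) = closure ((fun b : A => π b ξ) '' (B : Set A)))
    [K.HasOrthogonalProjection]
    (X : Set A) (hX : Dense X)
    (hcompress : ∀ x ∈ X, ∃ b ∈ B, ∀ h ∈ K,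
      (K.orthogonalProjectionOnto (π x h) : H) = K.orthogonalProjectionOnto (π b h)) :
    ∃ E : A →ₗ[ℂ] A, (∀ a : A, E a ∈ B) ∧ (∀ b ∈ B, E b = b) ∧
      (∀ a : A, ‖E a‖ ≤ ‖a‖) ∧ (∀ a : A, φ (E a) = φ a) := by
  classical
  haveI : IsClosed (B : Set A) := hBclosed
  have hKclosed : IsClosed (K : Set H) := by rw [hK]; exact isClosed_closure
  haveI : CompleteSpace K := hKclosed.completeSpace_coe
  -- ξ ∈ K
  have hξK : ξ ∈ K := by
    rw [← SetLike.mem_coe, hK]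
    exact subset_closure ⟨1, hB1, by simp⟩
  -- K is invariant under π(b) for b ∈ B
  have hinv : ∀ b ∈ B, ∀ h ∈ K, π b h ∈ K := by
    intro b hb h hh
    rw [← SetLike.mem_coe, hK]
    have hh' : h ∈ closure ((fun b : A => π b ξ) '' (B : Set A)) := by
      rw [← hK]; exact hh
    refine map_mem_closure (π b).continuous hh' ?_
    rintro - ⟨b', hb', rfl⟩
    exact ⟨b * b', mul_mem hb hb', by simp [map_mul]⟩
  -- ‖π a‖ ≤ ‖a‖
  have hπnorm : ∀ a : A, ‖π a‖ ≤ ‖a‖ := fun a => NonUnitalStarAlgHom.norm_apply_le π a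
  -- the compression predicate
  let W : A → A → Prop := fun a b => ∀ h ∈ K, (K.orthogonalProjectionOnto (π a h) : H) = π b h
  -- the restricted representation of B on K
  let ρfun : B → (K →L[ℂ] K) := fun b =>
    ((π (b : A)).comp K.subtypeL).codRestrict K (fun h => hinv b b.2 h h.2)
  have ρfun_apply : ∀ (b : B) (h : K), ((ρfun b h : K) : H) = π (b : A) h := fun _ _ => rfl
  let ρ : B →⋆ₐ[ℂ] (K →L[ℂ] K) :=
    { toFun := ρfun
      map_one' := ContinuousLinearMap.ext fun h => Subtype.ext <| by
        show (π ((1 : B) : A)) (h : H) = (h : H)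
        simp
      map_mul' := fun b b' => ContinuousLinearMap.ext fun h => Subtype.ext <| by
        show (π ((b * b' : B) : A)) (h : H) = π (b : A) (π (b' : A) (h : H))
        simp [map_mul]
      map_zero' := ContinuousLinearMap.ext fun h => Subtype.ext <| by
        show (π ((0 : B) : A)) (h : H) = 0
        simp
      map_add' := fun b b' => ContinuousLinearMap.ext fun h => Subtype.ext <| by
        show (π ((b + b' : B) : A)) (h : H) = π (b : A) (h : H) + π (b' : A) (h : H)
        simp [map_add]
      commutes' := fun c => ContinuousLinearMap.ext fun h => Subtype.ext <| by
        show (π ((algebraMap ℂ B c : B) : A)) (h : H) = ((algebraMap ℂ (K →L[ℂ] K) c) h : H)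
        simp [Algebra.algebraMap_eq_smul_one]
      map_star' := fun b => by
        rw [ContinuousLinearMap.star_eq_adjoint]
        rw [ContinuousLinearMap.eq_adjoint_iff]
        intro x y
        rw [Submodule.coe_inner, Submodule.coe_inner]
        show (inner ℂ (π ((star b : B) : A) (x : H)) (y : H) : ℂ) = inner ℂ (x : H) (π (b : A) (y : H))
        have : π ((star b : B) : A) = star (π (b : A)) := by
          rw [← map_star π]; rfl
        rw [this, ContinuousLinearMap.star_eq_adjoint,
          ContinuousLinearMap.adjoint_inner_left] }
  have hρ_inj : Function.Injective ρ := by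
    intro b b' hbb'
    have h0 : ρ (b - b') = 0 := by rw [map_sub, hbb', sub_self]
    have hz : π ((b : A) - (b' : A)) ξ = 0 := by
      have := congrArg (fun T : K →L[ℂ] K => ((T ⟨ξ, hξK⟩ : K) : H)) h0
      simpa [ρ, ρfun_apply] using this
    have : φ (star ((b : A) - (b' : A)) * ((b : A) - (b' : A))) = 0 := by
      rw [← hGNS, hz]; simp
    have := hφ_faithful _ this
    exact Subtype.ext (sub_eq_zero.mp this)
  have hρ_norm : ∀ b : B, ‖ρ b‖ = ‖(b : A)‖ := fun b =>
    NonUnitalStarAlgHom.norm_map ρ hρ_inj b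
  -- key norm estimate: any witness is dominated
  have hkey : ∀ (a : A) (b : B), W a (b : A) → ‖(b : A)‖ ≤ ‖a‖ := by
    intro a b hW
    rw [← hρ_norm]
    refine ContinuousLinearMap.opNorm_le_bound _ (norm_nonneg a) fun h => ?_
    have e0 : ((ρ b) h : H) = π (b : A) (h : H) := rfl
    calc ‖(ρ b) h‖ = ‖((ρ b) h : H)‖ := rfl
      _ = ‖(K.orthogonalProjectionOnto (π a (h : H)) : H)‖ := by rw [e0, ← hW h h.2]
      _ = ‖K.orthogonalProjectionOnto (π a (h : H))‖ := rfl
      _ ≤ ‖K.orthogonalProjectionOnto‖ * ‖π a (h : H)‖ :=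
          (K.orthogonalProjectionOnto).le_opNorm (π a (h : H))
      _ ≤ 1 * ‖π a (h : H)‖ :=
          mul_le_mul_of_nonneg_right (Submodule.orthogonalProjectionOnto_norm_le K) (norm_nonneg _)
      _ = ‖π a (h : H)‖ := one_mul _
      _ ≤ ‖π a‖ * ‖(h : H)‖ := (π a).le_opNorm _
      _ ≤ ‖a‖ * ‖(h : H)‖ :=
          mul_le_mul_of_nonneg_right (hπnorm a) (norm_nonneg _)
      _ = ‖a‖ * ‖h‖ := rfl
  -- uniqueness of witnesses
  have huniq : ∀ (a b b' : A), b ∈ B → b' ∈ B → W a b → W a b' → b = b' := by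
    intro a b b' hb hb' hWb hWb'
    have hc : (((⟨b, hb⟩ : B) - (⟨b', hb'⟩ : B) : B) : A) = b - b' := rfl
    have hW0 : W 0 ((((⟨b, hb⟩ : B) - (⟨b', hb'⟩ : B) : B)) : A) := by
      intro h hh
      have hr : (π (b - b')) h = π b h - π b' h := by rw [map_sub]; rfl
      rw [hc, hr, map_zero, ← hWb h hh, ← hWb' h hh]
      simp
    have hle := hkey 0 _ hW0
    rw [norm_zero] at hle
    have h0 : (((⟨b, hb⟩ : B) - (⟨b', hb'⟩ : B) : B) : A) = 0 := norm_le_zero_iff.mp hle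
    rw [hc] at h0
    exact sub_eq_zero.mp h0
  -- continuity of π
  have hπcont : Continuous (⇑π : A → H →L[ℂ] H) :=
    AddMonoidHomClass.continuous_of_bound π 1 (fun a => by rw [one_mul]; exact hπnorm a)
  -- W is compatible with the linear structure
  have hWsub : ∀ (a a' b b' : A), W a b → W a' b' → W (a - a') (b - b') := by
    intro a a' b b' h1 h2 h hh
    have e1 : (π (a - a')) h = (π a) h - (π a') h := by rw [map_sub]; rfl
    have e2 : (π (b - b')) h = (π b) h - (π b') h := by rw [map_sub]; rfl
    rw [e1, e2, map_sub, Submodule.coe_sub, h1 h hh, h2 h hh]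
  have hWadd : ∀ (a a' b b' : A), W a b → W a' b' → W (a + a') (b + b') := by
    intro a a' b b' h1 h2 h hh
    have e1 : (π (a + a')) h = (π a) h + (π a') h := by rw [map_add]; rfl
    have e2 : (π (b + b')) h = (π b) h + (π b') h := by rw [map_add]; rfl
    rw [e1, e2, map_add, Submodule.coe_add, h1 h hh, h2 h hh]
  have hWsmul : ∀ (c : ℂ) (a b : A), W a b → W (c • a) (c • b) := by
    intro c a b hw h hh
    have e1 : (π (c • a)) h = c • (π a) h := by rw [map_smul]; rfl
    have e2 : (π (c • b)) h = c • (π b) h := by rw [map_smul]; rfl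
    rw [e1, e2, map_smul, Submodule.coe_smul, hw h hh]
  -- every a ∈ A admits a witness
  have hgood : ∀ a : A, ∃ b ∈ B, W a b := by
    intro a
    have ha : a ∈ closure X := by rw [hX.closure_eq]; trivial
    obtain ⟨x, hxX, hxlim⟩ := mem_closure_iff_seq_limit.mp ha
    choose f hfB hfW using fun n => hcompress (x n) (hxX n)
    have hfW' : ∀ n, W (x n) (f n) := by
      intro n h hh
      rw [hfW n h hh]
      exact K.starProjection_eq_self_iff.mpr (hinv _ (hfB n) _ hh)
    have hdist : ∀ n m, dist (f n) (f m) ≤ dist (x n) (x m) := by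
      intro n m
      rw [dist_eq_norm, dist_eq_norm]
      exact hkey (x n - x m) ⟨f n - f m, sub_mem (hfB n) (hfB m)⟩
        (hWsub _ _ _ _ (hfW' n) (hfW' m))
    have hcauchy : CauchySeq f := by
      have hx : CauchySeq x := hxlim.cauchySeq
      rw [Metric.cauchySeq_iff] at hx ⊢
      intro ε hε
      obtain ⟨N, hN⟩ := hx ε hε
      exact ⟨N, fun n hn m hm => lt_of_le_of_lt (hdist n m) (hN n hn m hm)⟩
    obtain ⟨b, hblim⟩ := cauchySeq_tendsto_of_complete hcauchy
    have hbB : b ∈ B := hBclosed.mem_of_tendsto hblim (Filter.Eventually.of_forall hfB)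
    refine ⟨b, hbB, fun h hh => ?_⟩
    have gcont : Continuous (fun c : A => (K.orthogonalProjectionOnto ((π c) h) : H)) :=
      continuous_subtype_val.comp <| (K.orthogonalProjectionOnto).continuous.comp <|
        ((ContinuousLinearMap.apply ℂ H h).continuous.comp hπcont)
    have t1 := (gcont.tendsto a).comp hxlim
    have t2cont : Continuous (fun c : A => (π c) h) :=
      (ContinuousLinearMap.apply ℂ H h).continuous.comp hπcont
    have t2 := (t2cont.tendsto b).comp hblim
    have heq : ((fun c : A => (K.orthogonalProjectionOnto ((π c) h) : H)) ∘ x)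
        = fun n => (π (f n)) h := by
      funext n; exact hfW' n h hh
    rw [heq] at t1
    exact tendsto_nhds_unique t1 t2
  -- define E by unique choice
  let E0 : A → A := fun a => (hgood a).choose
  have hE0B : ∀ a, E0 a ∈ B := fun a => (hgood a).choose_spec.1
  have hE0W : ∀ a, W a (E0 a) := fun a => (hgood a).choose_spec.2
  have hE0uniq : ∀ a b, b ∈ B → W a b → E0 a = b := fun a b hb hw =>
    huniq a (E0 a) b (hE0B a) hb (hE0W a) hw
  refine ⟨{ toFun := E0
            map_add' := fun a a' => hE0uniq (a + a') (E0 a + E0 a')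
              (add_mem (hE0B a) (hE0B a')) (hWadd _ _ _ _ (hE0W a) (hE0W a'))
            map_smul' := fun c a => hE0uniq (c • a) (c • E0 a)
              (SMulMemClass.smul_mem c (hE0B a)) (hWsmul c _ _ (hE0W a)) },
    hE0B, ?_, ?_, ?_⟩
  · intro b hb
    exact hE0uniq b b hb (fun h hh =>
      K.starProjection_eq_self_iff.mpr (hinv b hb h hh))
  · intro a
    exact hkey a ⟨E0 a, hE0B a⟩ (hE0W a)
  · intro a
    show φ (E0 a) = φ a
    have h1 : φ a = inner ℂ ξ ((π a) ξ) := by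
      have := (hGNS a 1).symm
      simpa using this
    have h1' : φ (E0 a) = inner ℂ ξ ((π (E0 a)) ξ) := by
      have := (hGNS (E0 a) 1).symm
      simpa using this
    have h2 : (inner ℂ ξ ((π a) ξ) : ℂ)
        = inner ℂ ξ ((K.orthogonalProjectionOnto ((π a) ξ) : H)) := by
      have hperp := K.sub_starProjection_mem_orthogonal ((π a) ξ)
      have e : (inner ℂ ξ ((π a) ξ - (K.orthogonalProjectionOnto ((π a) ξ) : H)) : ℂ) = 0 :=
        (Submodule.mem_orthogonal K _).mp hperp ξ hξK
      rw [inner_sub_right] at e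
      exact (sub_eq_zero.mp e)
    rw [h1, h1', h2, hE0W a ξ hξK]
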